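/- Let G = (V, E) be a finite undirected graph with at least one edge and let e_0 ∈ E. Construct the game arena with V_Eve = V and V_Adam = E, with an edge from every v ∈ V to every e ∈ E, and an edge from each e = {u, w} ∈ E to u and to w; let the start vertex be e_0 and let the targets be the singletons {v} for v ∈ V. Then, for every k, Eve has a strategy such that every consistent play from e_0 visits at least k distinct vertices of V if and only if every vertex cover of G has size at least k. In particular, the maximum number of distinct vertices of V that Eve can guarantee to visit equals the minimum size of a vertex cover of G. -/

import Mathlib

/-- A game arena: a finite directed graph in which every vertex has at least one
outgoing edge, together with the set of vertices controlled by Eve (the remaining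
vertices are controlled by Adam). -/
structure Arena (V : Type*) [Fintype V] where
  E : V → V → Prop
  VEve : Set V
  succ_nonempty : ∀ v, ∃ w, E v w

variable {V : Type*} [Fintype V]

/-- An infinite play starting from `s`. -/
def IsPlay (A : Arena V) (s : V) (p : ℕ → V) : Prop :=
  p 0 = s ∧ ∀ i, A.E (p i) (p (i + 1))

/-- The play `p` visits the set `S`. -/
def Visits (p : ℕ → V) (S : Set V) : Prop := ∃ i, p i ∈ S

/-- A strategy maps a history (the sequence of previously visited vertices)
together with the current vertex to a next vertex. -/
def Strategy (V : Type*) : Type _ := List V → V → V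

/-- A strategy is valid if it always moves along an edge. -/
def ValidStrategy (A : Arena V) (σ : Strategy V) : Prop :=
  ∀ h v, A.E v (σ h v)

/-- The history `v_0 ... v_{i-1}` of the play `p` before time `i`. -/
def hist (p : ℕ → V) (i : ℕ) : List V := List.ofFn fun j : Fin i => p j

/-- The play `p` is consistent with the Eve-strategy `σ`. -/
def ConsistentEve (A : Arena V) (σ : Strategy V) (p : ℕ → V) : Prop :=
  ∀ i, p i ∈ A.VEve → p (i + 1) = σ (hist p i) (p i)

/-- The play `p` is consistent with the Adam-strategy `σ`. -/
def ConsistentAdam (A : Arena V) (σ : Strategy V) (p : ℕ → V) : Prop :=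
  ∀ i, p i ∉ A.VEve → p (i + 1) = σ (hist p i) (p i)

/-- The `i`-step Eve-attractor of the set `S`. -/
def AttrN (A : Arena V) (S : Set V) : ℕ → Set V
  | 0 => S
  | i + 1 => AttrN A S i ∪ {u | u ∈ A.VEve ∧ ∃ v, A.E u v ∧ v ∈ AttrN A S i}
      ∪ {u | u ∉ A.VEve ∧ ∀ v, A.E u v → v ∈ AttrN A S i}

/-- The Eve-attractor of the set `S`. -/
def Attr (A : Arena V) (S : Set V) : Set V := ⋃ i, AttrN A S i

/-- Eve wins the generalised reachability game with target sets `F i`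
from `s` if she has a strategy such that every consistent play from `s`
visits every target set. -/
def EveWins {ι : Type*} (A : Arena V) (s : V) (F : ι → Set V) : Prop :=
  ∃ σ : Strategy V, ValidStrategy A σ ∧
    ∀ p, IsPlay A s p → ConsistentEve A σ p → ∀ i, Visits p (F i)

/-- The vertex-cover game arena for an undirected graph `G`: Eve controls the
vertices of `G`, Adam controls the edges of `G`; from every vertex Eve can move
to every edge, and from an edge Adam can move to either of its endpoints. -/
noncomputable def vcArena {W : Type*} [Fintype W] (G : SimpleGraph W)
    [Fintype G.edgeSet] (e0 : G.edgeSet) : Arena (W ⊕ G.edgeSet) where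
  E p q :=
    match p, q with
    | .inl _, .inr _ => True
    | .inr e, .inl u => u ∈ (e : Sym2 W)
    | _, _ => False
  VEve := Set.range Sum.inl
  succ_nonempty p := by
    match p with
    | .inl v => exact ⟨Sum.inr e0, trivial⟩
    | .inr e => exact ⟨Sum.inl (e : Sym2 W).out.1, Sym2.out_fst_mem _⟩

section VCAux

variable {W : Type*} [Fintype W] {G : SimpleGraph W} [Fintype G.edgeSet]

lemma hist_succ' {V : Type*} (p : ℕ → V) (n : ℕ) :
    hist p (n + 1) = hist p n ++ [p n] := by
  rw [hist, List.ofFn_succ' (fun j : Fin (n+1) => p (j : ℕ)), List.concat_eq_append]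
  rfl

lemma mem_hist' {V : Type*} (p : ℕ → V) (n : ℕ) (a : V) :
    a ∈ hist p n ↔ ∃ j < n, p j = a := by
  simp only [hist, List.mem_ofFn, Set.mem_range]
  constructor
  · rintro ⟨j, rfl⟩; exact ⟨j, j.isLt, rfl⟩
  · rintro ⟨j, hj, rfl⟩; exact ⟨⟨j, hj⟩, rfl⟩

lemma not_vcE_inl_inl (e0 : G.edgeSet) (v w : W) :
    ¬ (vcArena G e0).E (Sum.inl v) (Sum.inl w) := fun h => h

lemma not_vcE_inr_inr (e0 : G.edgeSet) (e f : G.edgeSet) :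
    ¬ (vcArena G e0).E (Sum.inr e) (Sum.inr f) := fun h => h

lemma vcE_inl_inr (e0 : G.edgeSet) (v : W) (e : G.edgeSet) :
    (vcArena G e0).E (Sum.inl v) (Sum.inr e) := trivial

lemma vcE_inr_inl (e0 : G.edgeSet) (e : G.edgeSet) (u : W) :
    (vcArena G e0).E (Sum.inr e) (Sum.inl u) ↔ u ∈ (e : Sym2 W) := Iff.rfl

lemma inl_mem_VEve (e0 : G.edgeSet) (v : W) :
    (Sum.inl v : W ⊕ G.edgeSet) ∈ (vcArena G e0).VEve := ⟨v, rfl⟩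

lemma inr_not_mem_VEve (e0 : G.edgeSet) (e : G.edgeSet) :
    (Sum.inr e : W ⊕ G.edgeSet) ∉ (vcArena G e0).VEve := by
  rintro ⟨w, h⟩; exact Sum.inl_ne_inr h

lemma exists_mem_cov {S : Finset W} (hS : ∀ u w, G.Adj u w → u ∈ S ∨ w ∈ S)
    (e : G.edgeSet) : ∃ u, u ∈ (e : Sym2 W) ∧ u ∈ S := by
  have he : (e : Sym2 W) ∈ G.edgeSet := e.2
  generalize hq : (e : Sym2 W) = q at *
  induction q using Sym2.ind with
  | _ u w =>
    rcases hS u w (G.mem_edgeSet.mp he) with h | h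
    · exact ⟨u, Sym2.mem_mk_left u w, h⟩
    · exact ⟨w, Sym2.mem_mk_right u w, h⟩

open Classical in
/-- Adam's choice of endpoint, staying inside `S` whenever possible. -/
noncomputable def pickCov (G : SimpleGraph W) (S : Finset W) (e : G.edgeSet) : W :=
  if h : ∃ u, u ∈ (e : Sym2 W) ∧ u ∈ S then h.choose else (e : Sym2 W).out.1

lemma pickCov_mem (S : Finset W) (e : G.edgeSet) : pickCov G S e ∈ (e : Sym2 W) := by
  unfold pickCov
  split
  · next h => exact h.choose_spec.1
  · exact Sym2.out_fst_mem _

lemma pickCov_mem_cov {S : Finset W} (hS : ∀ u w, G.Adj u w → u ∈ S ∨ w ∈ S)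
    (e : G.edgeSet) : pickCov G S e ∈ S := by
  unfold pickCov
  rw [dif_pos (exists_mem_cov hS e)]
  exact (exists_mem_cov hS e).choose_spec.2

/-- Adam's play against Eve's strategy `σ`, always moving into the cover `S`:
the pair (history, current vertex). -/
noncomputable def advPlay (G : SimpleGraph W) [Fintype G.edgeSet] (e0 : G.edgeSet)
    (σ : Strategy (W ⊕ G.edgeSet)) (S : Finset W) :
    ℕ → List (W ⊕ G.edgeSet) × (W ⊕ G.edgeSet)
  | 0 => ([], Sum.inr e0)
  | n + 1 =>
      ((advPlay G e0 σ S n).1 ++ [(advPlay G e0 σ S n).2],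
        match (advPlay G e0 σ S n).2 with
        | Sum.inl w => σ (advPlay G e0 σ S n).1 (Sum.inl w)
        | Sum.inr e => Sum.inl (pickCov G S e))

lemma advPlay_fst (e0 : G.edgeSet) (σ : Strategy (W ⊕ G.edgeSet)) (S : Finset W) (n : ℕ) :
    (advPlay G e0 σ S n).1 = hist (fun m => (advPlay G e0 σ S m).2) n := by
  induction n with
  | zero => simp [advPlay, hist]
  | succ n ih => rw [hist_succ', advPlay, ih]

lemma advPlay_succ_inl (e0 : G.edgeSet) (σ : Strategy (W ⊕ G.edgeSet)) (S : Finset W)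
    (n : ℕ) (w : W) (h : (advPlay G e0 σ S n).2 = Sum.inl w) :
    (advPlay G e0 σ S (n + 1)).2 = σ (advPlay G e0 σ S n).1 (Sum.inl w) := by
  rw [advPlay, h]

lemma advPlay_succ_inr (e0 : G.edgeSet) (σ : Strategy (W ⊕ G.edgeSet)) (S : Finset W)
    (n : ℕ) (e : G.edgeSet) (h : (advPlay G e0 σ S n).2 = Sum.inr e) :
    (advPlay G e0 σ S (n + 1)).2 = Sum.inl (pickCov G S e) := by
  rw [advPlay, h]

/-- Forward direction: if Eve can guarantee `k` distinct vertices then every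
vertex cover has at least `k` elements. -/
lemma cover_card_ge (e0 : G.edgeSet) {k : ℕ} {σ : Strategy (W ⊕ G.edgeSet)}
    (hσ : ValidStrategy (vcArena G e0) σ)
    (hwin : ∀ p, IsPlay (vcArena G e0) (Sum.inr e0) p →
      ConsistentEve (vcArena G e0) σ p →
      k ≤ {v : W | ∃ i, p i = Sum.inl v}.ncard)
    (S : Finset W) (hS : ∀ u w, G.Adj u w → u ∈ S ∨ w ∈ S) : k ≤ S.card := by
  classical
  set p : ℕ → W ⊕ G.edgeSet := fun n => (advPlay G e0 σ S n).2 with hp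
  have hp0 : p 0 = Sum.inr e0 := rfl
  have hsl : ∀ n w, p n = Sum.inl w → p (n + 1) = σ (hist p n) (Sum.inl w) := by
    intro n w h
    show (advPlay G e0 σ S (n + 1)).2 = σ (hist p n) (Sum.inl w)
    rw [advPlay_succ_inl e0 σ S n w h, advPlay_fst]
  have hsr : ∀ n e, p n = Sum.inr e → p (n + 1) = Sum.inl (pickCov G S e) := by
    intro n e h
    exact advPlay_succ_inr e0 σ S n e h
  have hplay : IsPlay (vcArena G e0) (Sum.inr e0) p := by
    refine ⟨hp0, fun i => ?_⟩
    cases hi : p i with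
    | inl w => rw [hsl i w hi]; exact hσ _ _
    | inr e => rw [hsr i e hi]; exact pickCov_mem S e
  have hcons : ConsistentEve (vcArena G e0) σ p := by
    intro i hi
    obtain ⟨w, hw⟩ := hi
    rw [← hw]
    rw [hsl i w hw.symm, hw]
  have hsub : {v : W | ∃ i, p i = Sum.inl v} ⊆ ↑S := by
    rintro v ⟨i, hi⟩
    cases i with
    | zero => rw [hp0] at hi; exact (Sum.inr_ne_inl hi).elim
    | succ j =>
      cases hj : p j with
      | inl w =>
        exfalso
        have hE := hσ (hist p j) (Sum.inl w)
        rw [← hsl j w hj, hi] at hE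
        exact not_vcE_inl_inl e0 w v hE
      | inr e =>
        have := hsr j e hj
        rw [hi] at this
        obtain rfl : v = pickCov G S e := Sum.inl.inj this
        exact pickCov_mem_cov hS e
  calc k ≤ {v : W | ∃ i, p i = Sum.inl v}.ncard := hwin p hplay hcons
    _ ≤ (↑S : Set W).ncard := Set.ncard_le_ncard hsub (Set.toFinite _)
    _ = S.card := Set.ncard_coe_finset S

/-- The set of vertices of `G` recorded in a history together with a current
position. -/
def vset (h : List (W ⊕ G.edgeSet)) (v : W ⊕ G.edgeSet) : Set W :=
  {w | Sum.inl w ∈ h ∨ v = Sum.inl w}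

open Classical in
/-- Eve's strategy: move to an edge none of whose endpoints has been visited,
if one exists. -/
noncomputable def eveStrat (G : SimpleGraph W) [Fintype G.edgeSet] (e0 : G.edgeSet) :
    Strategy (W ⊕ G.edgeSet) := fun h v =>
  match v with
  | Sum.inr e => Sum.inl (e : Sym2 W).out.1
  | Sum.inl w =>
      if hc : ∃ e : G.edgeSet, ∀ u ∈ (e : Sym2 W), u ∉ vset h (Sum.inl w)
      then Sum.inr hc.choose else Sum.inr e0

lemma eveStrat_valid (e0 : G.edgeSet) : ValidStrategy (vcArena G e0) (eveStrat G e0) := by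
  intro h v
  cases v with
  | inr e => exact Sym2.out_fst_mem _
  | inl w =>
    show (vcArena G e0).E (Sum.inl w) _
    unfold eveStrat
    split
    · trivial
    · split <;> trivial

/-- Backward direction: if every vertex cover has at least `k` elements, Eve's
strategy guarantees `k` distinct visited vertices. -/
lemma eve_guarantee (e0 : G.edgeSet) {k : ℕ}
    (hcov : ∀ S : Finset W, (∀ u w, G.Adj u w → u ∈ S ∨ w ∈ S) → k ≤ S.card)
    (p : ℕ → W ⊕ G.edgeSet) (hp : IsPlay (vcArena G e0) (Sum.inr e0) p)
    (hc : ConsistentEve (vcArena G e0) (eveStrat G e0) p) :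
    k ≤ {v : W | ∃ i, p i = Sum.inl v}.ncard := by
  classical
  set T : ℕ → Finset W := fun n => Finset.univ.filter (fun w => ∃ j ≤ n, p j = Sum.inl w)
    with hT
  have mem_T : ∀ n w, w ∈ T n ↔ ∃ j ≤ n, p j = Sum.inl w := by
    intro n w; simp [hT]
  have T_mono : ∀ {m n}, m ≤ n → T m ⊆ T n := by
    intro m n hmn w hw
    rw [mem_T] at *
    obtain ⟨j, hj, hjw⟩ := hw
    exact ⟨j, hj.trans hmn, hjw⟩
  have mem_vset : ∀ n w, w ∈ vset (hist p n) (p n) ↔ w ∈ T n := by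
    intro n w
    rw [mem_T]
    constructor
    · rintro (h | h)
      · obtain ⟨j, hj, hjw⟩ := (mem_hist' p n _).mp h
        exact ⟨j, hj.le, hjw⟩
      · exact ⟨n, le_refl n, h⟩
    · rintro ⟨j, hj, hjw⟩
      rcases lt_or_eq_of_le hj with h | h
      · exact Or.inl ((mem_hist' p n _).mpr ⟨j, h, hjw⟩)
      · exact Or.inr (h ▸ hjw)
  have step_inr : ∀ n e, p n = Sum.inr e →
      ∃ v, p (n + 1) = Sum.inl v ∧ v ∈ (e : Sym2 W) := by
    intro n e hn
    have he := hp.2 n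
    rw [hn] at he
    cases hq : p (n + 1) with
    | inl v => rw [hq] at he; exact ⟨v, rfl, he⟩
    | inr f => rw [hq] at he; exact absurd he (not_vcE_inr_inr e0 e f)
  have step_inl : ∀ n v, p n = Sum.inl v → ∃ e, p (n + 1) = Sum.inr e := by
    intro n v hn
    have he := hp.2 n
    rw [hn] at he
    cases hq : p (n + 1) with
    | inl w => rw [hq] at he; exact absurd he (not_vcE_inl_inl e0 v w)
    | inr f => exact ⟨f, rfl⟩
  have alt : ∀ i, ∃ e, p (2 * i) = Sum.inr e := by
    intro i
    induction i with
    | zero => exact ⟨e0, hp.1⟩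
    | succ i ih =>
      obtain ⟨e, he⟩ := ih
      obtain ⟨v, hv, _⟩ := step_inr _ _ he
      obtain ⟨f, hf⟩ := step_inl _ _ hv
      have h2 : 2 * (i + 1) = 2 * i + 1 + 1 := by ring
      exact ⟨f, by rw [h2]; exact hf⟩
  have altO : ∀ i, ∃ v, p (2 * i + 1) = Sum.inl v := by
    intro i
    obtain ⟨e, he⟩ := alt i
    obtain ⟨v, hv, _⟩ := step_inr _ _ he
    exact ⟨v, hv⟩
  -- key growth step
  have key : ∀ i, (¬ ∀ u w, G.Adj u w → u ∈ T (2 * i + 1) ∨ w ∈ T (2 * i + 1)) →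
      ∃ u, u ∉ T (2 * i + 1) ∧ u ∈ T (2 * (i + 1) + 1) := by
    intro i hnc
    obtain ⟨v, hv⟩ := altO i
    push_neg at hnc
    obtain ⟨a, b, hab, ha, hb⟩ := hnc
    have hex : ∃ e : G.edgeSet, ∀ u ∈ (e : Sym2 W),
        u ∉ vset (hist p (2 * i + 1)) (Sum.inl v) := by
      refine ⟨⟨s(a, b), G.mem_edgeSet.mpr hab⟩, fun u hu => ?_⟩
      have hmem : u ∈ vset (hist p (2 * i + 1)) (p (2 * i + 1)) →
          u ∈ T (2 * i + 1) := (mem_vset _ u).mp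
      rw [hv] at hmem
      intro hvm
      have := hmem hvm
      rcases Sym2.mem_iff.mp hu with rfl | rfl
      · exact ha this
      · exact hb this
    have hstep : p (2 * i + 1 + 1) = eveStrat G e0 (hist p (2 * i + 1)) (p (2 * i + 1)) :=
      hc _ (by rw [hv]; exact ⟨v, rfl⟩)
    rw [hv] at hstep
    have hmid : p (2 * i + 1 + 1) = Sum.inr hex.choose := by
      rw [hstep]
      simp only [eveStrat]
      rw [dif_pos hex]
    obtain ⟨u, hu, hue⟩ := step_inr _ _ hmid
    refine ⟨u, ?_, ?_⟩
    · intro huT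
      have mv := mem_vset (2 * i + 1) u
      rw [hv] at mv
      exact hex.choose_spec u hue (mv.mpr huT)
    · rw [mem_T]
      exact ⟨2 * i + 1 + 1 + 1, by omega, hu⟩
  -- growth of the visited set
  have grow : ∀ i, (∃ j, ∀ u w, G.Adj u w → u ∈ T j ∨ w ∈ T j) ∨
      i + 1 ≤ (T (2 * i + 1)).card := by
    intro i
    induction i with
    | zero =>
      right
      obtain ⟨v, hv⟩ := altO 0
      exact Finset.card_pos.mpr ⟨v, (mem_T _ v).mpr ⟨2 * 0 + 1, le_refl _, hv⟩⟩
    | succ i ih =>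
      rcases ih with h | h
      · exact Or.inl h
      by_cases hcv : ∀ u w, G.Adj u w → u ∈ T (2 * i + 1) ∨ w ∈ T (2 * i + 1)
      · exact Or.inl ⟨2 * i + 1, hcv⟩
      right
      obtain ⟨u, hu1, hu2⟩ := key i hcv
      have hss : T (2 * i + 1) ⊂ T (2 * (i + 1) + 1) := by
        refine Finset.ssubset_iff_of_subset (T_mono (by omega)) |>.mpr ⟨u, hu2, hu1⟩
      have := Finset.card_lt_card hss
      omega
  have hcovex : ∃ j, ∀ u w, G.Adj u w → u ∈ T j ∨ w ∈ T j := by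
    rcases grow (Fintype.card W) with h | h
    · exact h
    · exfalso
      have : (T (2 * Fintype.card W + 1)).card ≤ Fintype.card W := Finset.card_le_univ _
      omega
  obtain ⟨j, hj⟩ := hcovex
  have hsub : (↑(T j) : Set W) ⊆ {v : W | ∃ i, p i = Sum.inl v} := by
    intro w hw
    obtain ⟨m, _, hm⟩ := (mem_T j w).mp hw
    exact ⟨m, hm⟩
  calc k ≤ (T j).card := hcov (T j) hj
    _ = (↑(T j) : Set W).ncard := (Set.ncard_coe_finset _).symm
    _ ≤ {v : W | ∃ i, p i = Sum.inl v}.ncard := Set.ncard_le_ncard hsub (Set.toFinite _)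

end VCAux

/-- in the vertex-cover game with start edge `e0` and singleton
targets `{v}` for every vertex `v` of `G`, Eve can guarantee that at least `k`
distinct vertices of `G` are visited iff every vertex cover of `G` has size at
least `k`; in particular the maximum number of distinct vertices Eve can
guarantee to visit is the minimum size of a vertex cover. -/
theorem vc_game_value (W : Type*) [Fintype W] (G : SimpleGraph W)
    [Fintype G.edgeSet] (hG : Nonempty G.edgeSet) (e0 : G.edgeSet) :
    (∀ k : ℕ,
      (∃ σ : Strategy (W ⊕ G.edgeSet), ValidStrategy (vcArena G e0) σ ∧
        ∀ p, IsPlay (vcArena G e0) (Sum.inr e0) p →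
          ConsistentEve (vcArena G e0) σ p →
          k ≤ {v : W | ∃ i, p i = Sum.inl v}.ncard) ↔
      (∀ S : Finset W, (∀ u w, G.Adj u w → u ∈ S ∨ w ∈ S) → k ≤ S.card)) ∧
    sSup {k : ℕ | ∃ σ : Strategy (W ⊕ G.edgeSet),
        ValidStrategy (vcArena G e0) σ ∧
        ∀ p, IsPlay (vcArena G e0) (Sum.inr e0) p →
          ConsistentEve (vcArena G e0) σ p →
          k ≤ {v : W | ∃ i, p i = Sum.inl v}.ncard} =
      sInf {c : ℕ | ∃ S : Finset W,
        (∀ u w, G.Adj u w → u ∈ S ∨ w ∈ S) ∧ c = S.card} := by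
  classical
  have main : ∀ k : ℕ,
      (∃ σ : Strategy (W ⊕ G.edgeSet), ValidStrategy (vcArena G e0) σ ∧
        ∀ p, IsPlay (vcArena G e0) (Sum.inr e0) p →
          ConsistentEve (vcArena G e0) σ p →
          k ≤ {v : W | ∃ i, p i = Sum.inl v}.ncard) ↔
      (∀ S : Finset W, (∀ u w, G.Adj u w → u ∈ S ∨ w ∈ S) → k ≤ S.card) := by
    intro k
    constructor
    · rintro ⟨σ, hσ, hwin⟩ S hS
      exact cover_card_ge e0 hσ hwin S hS
    · intro hcov
      exact ⟨eveStrat G e0, eveStrat_valid e0, fun p hp hc => eve_guarantee e0 hcov p hp hc⟩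
  refine ⟨main, ?_⟩
  set C : Set ℕ := {c : ℕ | ∃ S : Finset W,
      (∀ u w, G.Adj u w → u ∈ S ∨ w ∈ S) ∧ c = S.card} with hC
  have hCne : C.Nonempty :=
    ⟨(Finset.univ : Finset W).card, Finset.univ,
      fun u w _ => Or.inl (Finset.mem_univ u), rfl⟩
  have hK : {k : ℕ | ∃ σ : Strategy (W ⊕ G.edgeSet),
      ValidStrategy (vcArena G e0) σ ∧
      ∀ p, IsPlay (vcArena G e0) (Sum.inr e0) p →
        ConsistentEve (vcArena G e0) σ p →
        k ≤ {v : W | ∃ i, p i = Sum.inl v}.ncard} = Set.Iic (sInf C) := by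
    ext k
    simp only [Set.mem_setOf_eq, Set.mem_Iic]
    rw [main k]
    constructor
    · intro h
      obtain ⟨S, hS, hc⟩ := Nat.sInf_mem hCne
      rw [hc]
      exact h S hS
    · intro h S hS
      exact h.trans (Nat.sInf_le ⟨S, hS, rfl⟩)
  rw [hK, csSup_Iic]
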